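/- Let A be symmetric positive definite with eigenvalues in [λ_min, λ_max] and let ρ, c > 0 satisfy ρ ≤ c/(λ_max² − λ_min²) strictly (so c − (λ_max² − λ_min²)ρ > 0). If a positive sequence (ρ_t) satisfies ρ_{t+1} ≥ ρ_t·(c − (λ_max² − λ_min²)ρ_t)/(λ_min²ρ_t + c) with ρ_t ≤ ρ for all t ≥ t₀, then 1/ρ_t ≤ 1/ρ_{t₀} + (t − t₀)·λ_max²/(c − (λ_max² − λ_min²)ρ), hence ρ_t = Ω(1/t). -/

import Mathlib

/-- Quantitative lower-bound recursion for SGD with i.i.d. noise on a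
quadratic: `A` symmetric positive definite with eigenvalues in `[λmin, λmax]`,
`c − (λmax² − λmin²)·ρbar > 0`, and a positive sequence satisfying the multiplicative
recursion `ρ_{t+1} ≥ ρ_t (c − (λmax²−λmin²)ρ_t)/(λmin² ρ_t + c)` with `ρ_t ≤ ρbar` for
`t ≥ t₀`. Then `1/ρ_t ≤ 1/ρ_{t₀} + (t−t₀) λmax²/(c − (λmax²−λmin²)ρbar)`,
hence `ρ_t = Ω(1/t)`. -/
theorem omgd_iid_noise_lower_bound_recursion {d : ℕ}
    (A : Matrix (Fin d) (Fin d) ℝ) (hA : A.IsHermitian) (hpd : A.PosDef)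
    (lmin lmax : ℝ) (hl : 0 < lmin) (hll : lmin ≤ lmax)
    (heig : ∀ i, lmin ≤ hA.eigenvalues i ∧ hA.eigenvalues i ≤ lmax)
    (c ρbar : ℝ) (hc : 0 < c) (hρbar : 0 < ρbar)
    (hden : 0 < c - (lmax ^ 2 - lmin ^ 2) * ρbar)
    (ρ : ℕ → ℝ) (hpos : ∀ t, 0 < ρ t) (t₀ : ℕ)
    (hrec : ∀ t, t₀ ≤ t →
      ρ (t + 1) ≥ ρ t * (c - (lmax ^ 2 - lmin ^ 2) * ρ t) / (lmin ^ 2 * ρ t + c))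
    (hbd : ∀ t, t₀ ≤ t → ρ t ≤ ρbar) :
    (∀ t, t₀ ≤ t →
      1 / ρ t ≤ 1 / ρ t₀ + ((t : ℝ) - (t₀ : ℝ)) * lmax ^ 2
        / (c - (lmax ^ 2 - lmin ^ 2) * ρbar)) ∧
    ∃ C > (0 : ℝ), ∀ t, t₀ ≤ t → 0 < t → ρ t ≥ C / (t : ℝ) := by
  set Δ : ℝ := lmax ^ 2 - lmin ^ 2 with hΔ
  have hΔ0 : 0 ≤ Δ := by nlinarith
  have hlmax : 0 < lmax ^ 2 := by nlinarith
  set D : ℝ := c - Δ * ρbar with hD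
  set K : ℝ := lmax ^ 2 / D with hK
  have hK0 : 0 < K := div_pos hlmax hden
  -- key step inequality
  have step : ∀ t, t₀ ≤ t → 1 / ρ (t + 1) ≤ 1 / ρ t + K := by
    intro t ht
    have hρt := hpos t
    have hρb := hbd t ht
    have hdent : 0 < c - Δ * ρ t := by nlinarith
    have hdenD : D ≤ c - Δ * ρ t := by nlinarith
    have hden2 : 0 < lmin ^ 2 * ρ t + c := by positivity
    have hnum : 0 < ρ t * (c - Δ * ρ t) := by positivity
    have hrhs : 0 < ρ t * (c - Δ * ρ t) / (lmin ^ 2 * ρ t + c) := by positivity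
    have h1 : 1 / ρ (t + 1) ≤ (lmin ^ 2 * ρ t + c) / (ρ t * (c - Δ * ρ t)) := by
      have h1' := one_div_le_one_div_of_le hrhs (hrec t ht)
      rwa [one_div_div] at h1'
    have h2 : (lmin ^ 2 * ρ t + c) / (ρ t * (c - Δ * ρ t))
        = 1 / ρ t + lmax ^ 2 / (c - Δ * ρ t) := by
      rw [div_add_div _ _ hρt.ne' hdent.ne', div_eq_div_iff hnum.ne' (mul_ne_zero hρt.ne' hdent.ne'), hΔ]
      ring
    have h3 : lmax ^ 2 / (c - Δ * ρ t) ≤ K := by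
      rw [hK]
      exact div_le_div_of_nonneg_left hlmax.le hden hdenD
    calc 1 / ρ (t + 1) ≤ 1 / ρ t + lmax ^ 2 / (c - Δ * ρ t) := by rw [← h2]; exact h1
      _ ≤ 1 / ρ t + K := by linarith
  have main : ∀ t, t₀ ≤ t →
      1 / ρ t ≤ 1 / ρ t₀ + ((t : ℝ) - (t₀ : ℝ)) * lmax ^ 2 / D := by
    intro t ht
    induction t, ht using Nat.le_induction with
    | base => simp
    | succ n hn ih =>
      have := step n hn
      have hcast : ((n : ℝ) + 1 - (t₀ : ℝ)) * lmax ^ 2 / D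
          = ((n : ℝ) - (t₀ : ℝ)) * lmax ^ 2 / D + K := by
        rw [hK]; field_simp; ring
      push_cast
      rw [hcast]
      linarith
  refine ⟨main, ?_⟩
  set M : ℝ := 1 / ρ t₀ + K + (t₀ : ℝ) * K with hM
  have hMpos : 0 < M := by
    have := hpos t₀
    positivity
  refine ⟨1 / M, by positivity, ?_⟩
  intro t ht htpos
  have h := main t ht
  have htR : (0 : ℝ) < (t : ℝ) := by exact_mod_cast htpos
  have ht1 : (1 : ℝ) ≤ (t : ℝ) := by exact_mod_cast htpos
  have ht0 : (0 : ℝ) ≤ (t₀ : ℝ) := Nat.cast_nonneg _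
  have h2 : ((t : ℝ) - (t₀ : ℝ)) * lmax ^ 2 / D ≤ (t : ℝ) * K + (t₀ : ℝ) * K := by
    rw [hK, ← mul_div_assoc, ← mul_div_assoc, ← add_div]
    gcongr
    nlinarith
  have h3 : 1 / ρ t₀ ≤ (t : ℝ) * (1 / ρ t₀) := by
    nlinarith [(one_div_pos.mpr (hpos t₀)).le]
  have h1 : 1 / ρ t ≤ (t : ℝ) * M := by
    rw [hM]
    have : (t : ℝ) * (1 / ρ t₀ + K + (t₀ : ℝ) * K)
        = (t : ℝ) * (1 / ρ t₀) + (t : ℝ) * K + (t : ℝ) * ((t₀ : ℝ) * K) := by ring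
    rw [this]
    have h4 : (t₀ : ℝ) * K ≤ (t : ℝ) * ((t₀ : ℝ) * K) := by
      nlinarith [mul_nonneg ht0 hK0.le]
    linarith
  have h5 : 1 / ((t : ℝ) * M) ≤ ρ t := by
    have := one_div_le_one_div_of_le (one_div_pos.mpr (hpos t)) h1
    rwa [one_div_one_div] at this
  calc 1 / M / (t : ℝ) = 1 / ((t : ℝ) * M) := by rw [div_div, mul_comm]
    _ ≤ ρ t := h5
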